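/- For any positive integer n and any unit vectors |ψ⟩, |ψ'⟩ ∈ (ℂ²)^{⊗n}, the n-tangle satisfies |τ_n(|ψ⟩) − τ_n(|ψ'⟩)| ≤ √2 · ‖ψ − ψ'‖₁. -/

import Mathlib

open scoped BigOperators ComplexConjugate ComplexOrder

noncomputable section

namespace QIpaper

/-- Inner product `⟨ψ|φ⟩`, conjugate-linear in the first argument. -/
def braket {I : Type*} [Fintype I] (ψ φ : I → ℂ) : ℂ := ∑ x, conj (ψ x) * φ x

/-- Outer product `|ψ⟩⟨ψ|`. -/
def dm {I : Type*} (ψ : I → ℂ) : Matrix I I ℂ := Matrix.of fun x y => ψ x * conj (ψ y)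

open Classical in
/-- Positive semidefinite square root (junk value `0` on non-PSD matrices). -/
def psdSqrt {I : Type*} [Fintype I] [DecidableEq I] (A : Matrix I I ℂ) : Matrix I I ℂ :=
  if h : A.PosSemidef then
    h.1.eigenvectorUnitary.1 * Matrix.diagonal ((↑) ∘ Real.sqrt ∘ h.1.eigenvalues) *
      (star h.1.eigenvectorUnitary : Matrix I I ℂ)
  else 0

/-- The trace norm `‖A‖₁ = tr √(AᴴA)`. -/
def traceNorm {I : Type*} [Fintype I] [DecidableEq I] (A : Matrix I I ℂ) : ℝ :=
  (psdSqrt (A.conjTranspose * A)).trace.re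

/-- Fidelity `F(ρ,σ) = tr √(√ρ σ √ρ)`. -/
def fidelity {I : Type*} [Fintype I] [DecidableEq I] (ρ σ : Matrix I I ℂ) : ℝ :=
  (psdSqrt (psdSqrt ρ * σ * psdSqrt ρ)).trace.re

/-- Purity `tr(ρ²)`. -/
def purity {I : Type*} [Fintype I] (ρ : Matrix I I ℂ) : ℝ := ((ρ * ρ).trace).re

def sigmaX : Matrix (Fin 2) (Fin 2) ℂ := !![0, 1; 1, 0]
def sigmaY : Matrix (Fin 2) (Fin 2) ℂ := !![0, -Complex.I; Complex.I, 0]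
def sigmaZ : Matrix (Fin 2) (Fin 2) ℂ := !![1, 0; 0, -1]

/-- `σ_y^{⊗I}` on the qubits indexed by `I`. -/
def sigmaYn {I : Type*} [Fintype I] [DecidableEq I] : Matrix (I → Fin 2) (I → Fin 2) ℂ :=
  Matrix.of fun x y => ∏ k, sigmaY (x k) (y k)

/-- The `n`-tangle `τ(ψ) = |⟨ψ|σ_y^{⊗n}|ψ*⟩|`. -/
def tangle {I : Type*} [Fintype I] [DecidableEq I] (ψ : (I → Fin 2) → ℂ) : ℝ :=
  ‖(∑ x, ∑ y, conj (ψ x) * sigmaYn x y * conj (ψ y))‖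

/-- Entrywise complex conjugate of a matrix. -/
def conjM {I J : Type*} (ρ : Matrix I J ℂ) : Matrix I J ℂ := Matrix.of fun x y => conj (ρ x y)

/-- `ρ̃ = σ_y^{⊗n} ρ* σ_y^{⊗n}`. -/
def tildeM {I : Type*} [Fintype I] [DecidableEq I] (ρ : Matrix (I → Fin 2) (I → Fin 2) ℂ) :
    Matrix (I → Fin 2) (I → Fin 2) ℂ := sigmaYn * conjM ρ * sigmaYn

/-- The Wootters tilde `|ψ̃⟩ = σ_y^{⊗n}|ψ*⟩`. -/
def wtilde {I : Type*} [Fintype I] [DecidableEq I] (ψ : (I → Fin 2) → ℂ) : (I → Fin 2) → ℂ :=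
  sigmaYn.mulVec (fun x => conj (ψ x))

/-- Reduced density matrix of the pure state `ψ` on the qubits in `s`
(tracing out the complement). -/
def reduced {n : ℕ} (s : Finset (Fin n)) (ψ : (Fin n → Fin 2) → ℂ) :
    Matrix ({i : Fin n // i ∈ s} → Fin 2) ({i : Fin n // i ∈ s} → Fin 2) ℂ :=
  Matrix.of fun a b => ∑ c : {i : Fin n // i ∉ s} → Fin 2,
    ψ (fun i => if h : i ∈ s then a ⟨i, h⟩ else c ⟨i, h⟩) *
    conj (ψ (fun i => if h : i ∈ s then b ⟨i, h⟩ else c ⟨i, h⟩))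

/-- GME-concurrence `C_GME(ψ) = min_{∅ ⊊ γ ⊊ [n]} √(2(1 − tr ψ_γ²))`. -/
def gme {n : ℕ} (ψ : (Fin n → Fin 2) → ℂ) : ℝ :=
  sInf {r : ℝ | ∃ γ : Finset (Fin n), γ ≠ ∅ ∧ γ ≠ Finset.univ ∧
    r = Real.sqrt (2 * (1 - purity (reduced γ ψ)))}

/-- Concentratable entanglement `C(ψ; s) = 1 − 2^{−|s|} Σ_{γ⊆s} tr(ψ_γ²)`. -/
def CE {n : ℕ} (ψ : (Fin n → Fin 2) → ℂ) (s : Finset (Fin n)) : ℝ :=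
  1 - (1 / 2 ^ s.card) * ∑ γ ∈ s.powerset, purity (reduced γ ψ)

/-- The subnormalized post-measurement vector `(⟨v|⊗I)|Ψ⟩`. -/
def contract {IA IB : Type*} [Fintype IA] (v : IA → ℂ) (Ψ : IA × IB → ℂ) : IB → ℂ :=
  fun y => ∑ x, conj (v x) * Ψ (x, y)

/-- Probability `p_v = ⟨Ψ|(|v⟩⟨v| ⊗ I)|Ψ⟩` of outcome `v`. -/
def prob {IA IB : Type*} [Fintype IA] [Fintype IB] (v : IA → ℂ) (Ψ : IA × IB → ℂ) : ℝ :=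
  (braket (contract v Ψ) (contract v Ψ)).re

/-- Normalized post-measurement state (the zero vector when the probability vanishes). -/
def postState {IA IB : Type*} [Fintype IA] [Fintype IB] (v : IA → ℂ) (Ψ : IA × IB → ℂ) :
    IB → ℂ := fun y => ((Real.sqrt (prob v Ψ) : ℂ))⁻¹ * contract v Ψ y

/-- `b` is an orthonormal family. (An orthonormal family indexed by the space's own
index type is an orthonormal basis.) -/
def ONB {J I : Type*} [Fintype I] [DecidableEq J] (b : J → I → ℂ) : Prop :=
  ∀ i j, braket (b i) (b j) = if i = j then 1 else 0

/-- Average post-measurement entanglement `Ē_β(Ψ) = Σ_i p_i E(φ_i)`. -/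
def avgE {ι IA IB : Type*} [Fintype ι] [Fintype IA] [Fintype IB]
    (E : (IB → ℂ) → ℝ) (b : ι → IA → ℂ) (Ψ : IA × IB → ℂ) : ℝ :=
  ∑ i, prob (b i) Ψ * E (postState (b i) Ψ)

/-- Multipartite entanglement of assistance: supremum of `Ē_β` over all
orthonormal bases `β` of `H_A`. -/
def Lglobal {IA IB : Type*} [Fintype IA] [Fintype IB] [DecidableEq IA]
    (E : (IB → ℂ) → ℝ) (Ψ : IA × IB → ℂ) : ℝ :=
  sSup {r : ℝ | ∃ b : IA → IA → ℂ, ONB b ∧ r = avgE E b Ψ}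

/-- Tensor-product basis of `(ℂ²)^{⊗K}` built from single-qubit bases. -/
def productBasis {K : Type*} [Fintype K] (q : K → Fin 2 → Fin 2 → ℂ) :
    (K → Fin 2) → (K → Fin 2) → ℂ :=
  fun i x => ∏ k, q k (i k) (x k)

/-- Localizable multipartite entanglement: supremum of `Ē_β` over product bases of
single-qubit orthonormal bases of `H_A = (ℂ²)^{⊗K}`. -/
def Lloc {K IB : Type*} [Fintype K] [DecidableEq K] [Fintype IB]
    (E : (IB → ℂ) → ℝ) (Ψ : (K → Fin 2) × IB → ℂ) : ℝ :=
  sSup {r : ℝ | ∃ q : K → Fin 2 → Fin 2 → ℂ, (∀ k, ONB (q k)) ∧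
    r = avgE E (productBasis q) Ψ}

/-- Partial trace over the `A` system of `|Ψ⟩⟨Ψ|`. -/
def ptraceA {IA IB : Type*} [Fintype IA] (Ψ : IA × IB → ℂ) : Matrix IB IB ℂ :=
  Matrix.of fun y y' => ∑ x, Ψ (x, y) * conj (Ψ (x, y'))

/-- Reduced density matrix of `|Ψ⟩⟨Ψ|` on the subset `s` of the `B` qubits. -/
def reducedB {IA : Type*} [Fintype IA] {n : ℕ} (s : Finset (Fin n))
    (Ψ : IA × (Fin n → Fin 2) → ℂ) :
    Matrix ({i : Fin n // i ∈ s} → Fin 2) ({i : Fin n // i ∈ s} → Fin 2) ℂ :=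
  Matrix.of fun a b => ∑ x : IA, ∑ c : {i : Fin n // i ∉ s} → Fin 2,
    Ψ (x, fun i => if h : i ∈ s then a ⟨i, h⟩ else c ⟨i, h⟩) *
    conj (Ψ (x, fun i => if h : i ∈ s then b ⟨i, h⟩ else c ⟨i, h⟩))



section Aux

open Matrix

variable {I : Type*} [Fintype I]

/-- Outer product `|u⟩⟨v|`. -/
def outer {J : Type*} (u v : J → ℂ) : Matrix J J ℂ := Matrix.of fun x y => u x * conj (v y)

omit [Fintype I] in
lemma dm_eq_outer (u : I → ℂ) : dm u = outer u u := rfl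

lemma outer_mul_outer (u v w z : I → ℂ) :
    outer u v * outer w z = braket v w • outer u z := by
  ext x y
  simp only [Matrix.mul_apply, outer, braket, Matrix.smul_apply, Matrix.of_apply, smul_eq_mul,
    Finset.sum_mul]
  exact Finset.sum_congr rfl fun k _ => by ring

lemma trace_outer (u v : I → ℂ) : (outer u v).trace = braket v u := by
  simp [Matrix.trace, Matrix.diag, outer, braket, mul_comm]

omit [Fintype I] in
lemma conjTranspose_dm (u : I → ℂ) : (dm u).conjTranspose = dm u := by
  ext x y; simp [dm, Matrix.conjTranspose_apply, mul_comm]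

lemma braket_comm (u v : I → ℂ) : braket v u = conj (braket u v) := by
  simp [braket, map_sum, mul_comm]

lemma sum_abs_sq (u : I → ℂ) (h : braket u u = 1) :
    ∑ x, ‖u x‖ ^ 2 = 1 := by
  have h2 : (↑(∑ x, ‖u x‖ ^ 2) : ℂ) = 1 := by
    push_cast
    rw [← h, braket]
    exact Finset.sum_congr rfl fun x _ => by
      rw [mul_comm, Complex.mul_conj, ← Complex.ofReal_pow, Complex.sq_norm]
  exact_mod_cast h2

lemma cs' (f g : I → ℂ) :
    ‖∑ x, f x * g x‖ ≤
      Real.sqrt (∑ x, ‖f x‖ ^ 2) * Real.sqrt (∑ x, ‖g x‖ ^ 2) := by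
  have h0 : ‖∑ x, f x * g x‖ ≤ ∑ x, ‖f x‖ * ‖g x‖ := by
    refine (norm_sum_le _ _).trans_eq ?_
    simp [_root_.map_mul]
  refine h0.trans ?_
  rw [← Real.sqrt_mul (by positivity), Real.le_sqrt (by positivity) (by positivity)]
  exact Finset.sum_mul_sq_le_sq_mul_sq _ _ _

variable {n : ℕ}

/-- Bitwise flip. -/
def flip2 {n : ℕ} (x : Fin n → Fin 2) : Fin n → Fin 2 := fun k => x k + 1

lemma flip2_invol {n : ℕ} : Function.Involutive (flip2 (n := n)) := by
  intro x; funext k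
  have : ∀ a : Fin 2, a + 1 + 1 = a := by decide
  exact this (x k)

lemma sigmaY_diag_zero : ∀ a b : Fin 2, b ≠ a + 1 → sigmaY a b = 0 := by
  intro a b h
  fin_cases a <;> fin_cases b <;> simp_all [sigmaY]

lemma abs_sigmaY_flip : ∀ a : Fin 2, ‖sigmaY a (a + 1)‖ = 1 := by
  intro a; fin_cases a <;> simp [sigmaY]

lemma sigmaYn_eq_zero {x y : Fin n → Fin 2} (h : y ≠ flip2 x) : sigmaYn x y = 0 := by
  obtain ⟨k, hk⟩ := Function.ne_iff.mp h
  exact Finset.prod_eq_zero (Finset.mem_univ k) (sigmaY_diag_zero (x k) (y k) hk)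

lemma abs_sigmaYn_flip (x : Fin n → Fin 2) : ‖sigmaYn x (flip2 x)‖ = 1 := by
  show ‖∏ k, sigmaY (x k) (x k + 1)‖ = 1
  rw [norm_prod]
  simp [abs_sigmaY_flip]

lemma sum_collapse (a b : (Fin n → Fin 2) → ℂ) :
    ∑ x, ∑ y, a x * sigmaYn x y * b y = ∑ x, a x * sigmaYn x (flip2 x) * b (flip2 x) := by
  refine Finset.sum_congr rfl fun x _ => ?_
  refine Finset.sum_eq_single (flip2 x) (fun y _ hy => ?_) (fun h => absurd (Finset.mem_univ _) h)
  rw [sigmaYn_eq_zero hy, mul_zero, zero_mul]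

lemma sum_flip_sq (b : (Fin n → Fin 2) → ℂ) :
    ∑ x, ‖b (flip2 x)‖ ^ 2 = ∑ x, ‖b x‖ ^ 2 :=
  Fintype.sum_bijective flip2 flip2_invol.bijective _ _ (fun _ => rfl)

lemma bilin_bound (a b : (Fin n → Fin 2) → ℂ) :
    ‖∑ x, ∑ y, a x * sigmaYn x y * b y‖ ≤
      Real.sqrt (∑ x, ‖a x‖ ^ 2) * Real.sqrt (∑ x, ‖b x‖ ^ 2) := by
  rw [sum_collapse]
  have h := cs' (fun x => a x * sigmaYn x (flip2 x)) (fun x => b (flip2 x))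
  simp only [_root_.map_mul, abs_sigmaYn_flip, mul_one, sum_flip_sq] at h
  simpa [mul_pow, abs_sigmaYn_flip] using h

open scoped MatrixOrder in
lemma psdSqrt_unique {J : Type*} [Fintype J] [DecidableEq J] {A S : Matrix J J ℂ}
    (hA : A.PosSemidef) (hS : S.PosSemidef) (h : S ^ 2 = A) :
    S = hA.1.eigenvectorUnitary.1 * Matrix.diagonal ((↑) ∘ Real.sqrt ∘ hA.1.eigenvalues) *
      (star hA.1.eigenvectorUnitary : Matrix J J ℂ) := by
  have h1 : CFC.sqrt A = S := CFC.sqrt_unique (by rw [← h, sq]) hS.nonneg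
  rw [← h1, CFC.sqrt_eq_cfc, cfc_nnreal_eq_real _ A hA.nonneg, hA.1.cfc_eq]
  have he : ∀ i, max (hA.1.eigenvalues i) 0 = hA.1.eigenvalues i :=
    fun i => max_eq_left (hA.eigenvalues_nonneg i)
  simp [Matrix.IsHermitian.cfc, Real.coe_sqrt, Real.coe_toNNReal', Function.comp_def, he]

end Aux

/-- Lipschitz continuity of the `n`-tangle:
`|τ_n(ψ) − τ_n(ψ')| ≤ √2 ‖ψ − ψ'‖₁` for unit vectors `ψ, ψ' ∈ (ℂ²)^{⊗n}`. -/
theorem tangle_continuity (n : ℕ) (hn : 0 < n)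
    (ψ ψ' : (Fin n → Fin 2) → ℂ) (hψ : braket ψ ψ = 1) (hψ' : braket ψ' ψ' = 1) :
    |tangle ψ - tangle ψ'| ≤ Real.sqrt 2 * traceNorm (dm ψ - dm ψ') := by
  classical
  set c0 : ℂ := braket ψ ψ' with hc0
  set t : ℝ := ‖c0‖ with htdef
  have ht0 : 0 ≤ t := norm_nonneg _
  set u : ℂ := if c0 = 0 then 1 else (t : ℂ) / c0 with hu
  have habsu : ‖u‖ = 1 := by
    by_cases h : c0 = 0
    · simp [hu, h]
    · have habs0 : ‖c0‖ ≠ 0 := (norm_ne_zero_iff.mpr h)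
      rw [hu, if_neg h, norm_div, Complex.norm_of_nonneg ht0, ← htdef,
        div_self habs0]
  have huu : u * conj u = 1 := by
    rw [Complex.mul_conj, Complex.normSq_eq_norm_sq, habsu]
    norm_num
  set φ : (Fin n → Fin 2) → ℂ := fun x => u * ψ' x with hφ
  -- basic facts about φ
  have hbψφ : braket ψ φ = (t : ℂ) := by
    have h1 : braket ψ φ = u * c0 := by
      rw [hc0, braket, braket, Finset.mul_sum]
      exact Finset.sum_congr rfl fun x _ => by simp [hφ]; ring
    by_cases h : c0 = 0
    · rw [h1, h, mul_zero, htdef, h]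
      simp
    · rw [h1, hu, if_neg h, div_mul_cancel₀ _ h]
  have hbφψ : braket φ ψ = (t : ℂ) := by
    rw [braket_comm, hbψφ, Complex.conj_ofReal]
  have hbφφ : braket φ φ = 1 := by
    have h1 : braket φ φ = (conj u * u) * braket ψ' ψ' := by
      rw [braket, braket, Finset.mul_sum]
      exact Finset.sum_congr rfl fun x _ => by simp [hφ]; ring
    rw [h1, hψ', mul_one, mul_comm, huu]
  have hdmφ : dm φ = dm ψ' := by
    ext x y
    simp only [dm, Matrix.of_apply, hφ, map_mul]
    calc u * ψ' x * (conj u * conj (ψ' y)) = (u * conj u) * (ψ' x * conj (ψ' y)) := by ring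
    _ = ψ' x * conj (ψ' y) := by rw [huu, one_mul]
  have htangleφ : tangle φ = tangle ψ' := by
    rw [tangle, tangle]
    have h1 : (∑ x, ∑ y, conj (φ x) * sigmaYn x y * conj (φ y)) =
        (conj u * conj u) * ∑ x, ∑ y, conj (ψ' x) * sigmaYn x y * conj (ψ' y) := by
      rw [Finset.mul_sum]
      refine Finset.sum_congr rfl fun x _ => ?_
      rw [Finset.mul_sum]
      refine Finset.sum_congr rfl fun y _ => ?_
      simp only [hφ, map_mul]
      ring
    rw [h1, norm_mul, norm_mul, Complex.norm_conj, habsu, one_mul, one_mul]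
  -- t ≤ 1
  have hsψ := sum_abs_sq ψ hψ
  have hsψ' := sum_abs_sq ψ' hψ'
  have hsφ := sum_abs_sq φ hbφφ
  have ht1 : t ≤ 1 := by
    have h := cs' (fun x => conj (ψ x)) ψ'
    simp only [Complex.norm_conj] at h
    rw [hsψ, hsψ', Real.sqrt_one, mul_one] at h
    exact h
  -- distance
  have hdist : ∑ x, ‖ψ x - φ x‖ ^ 2 = 2 - 2 * t := by
    have hterm : ∀ x, ‖ψ x - φ x‖ ^ 2 =
        ‖ψ x‖ ^ 2 + ‖φ x‖ ^ 2 - 2 * (ψ x * conj (φ x)).re := by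
      intro x
      rw [Complex.sq_norm, Complex.sq_norm, Complex.sq_norm, Complex.normSq_sub]
    have hsum : ∑ x, ψ x * conj (φ x) = conj (braket ψ φ) := by
      rw [braket, map_sum]
      exact Finset.sum_congr rfl fun x _ => by simp [mul_comm]
    calc ∑ x, ‖ψ x - φ x‖ ^ 2
        = ∑ x, (‖ψ x‖ ^ 2 + ‖φ x‖ ^ 2 - 2 * (ψ x * conj (φ x)).re) :=
          Finset.sum_congr rfl fun x _ => hterm x
      _ = (∑ x, (‖ψ x‖ ^ 2 + ‖φ x‖ ^ 2))
            - ∑ x, 2 * (ψ x * conj (φ x)).re := Finset.sum_sub_distrib _ _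
      _ = 2 - 2 * t := by
          rw [Finset.sum_add_distrib, hsψ, hsφ, ← Finset.mul_sum, ← Complex.re_sum, hsum,
            hbψφ, Complex.conj_ofReal, Complex.ofReal_re]
          norm_num
  -- Lipschitz bound on the tangle side
  have hmain1 : |tangle ψ - tangle φ| ≤ 2 * Real.sqrt (2 - 2 * t) := by
    rw [tangle, tangle]
    set F1 : ℂ := ∑ x, ∑ y, conj (ψ x) * sigmaYn x y * conj (ψ y) with hF1
    set F2 : ℂ := ∑ x, ∑ y, conj (φ x) * sigmaYn x y * conj (φ y) with hF2
    set G1 : ℂ := ∑ x, ∑ y, (conj (ψ x) - conj (φ x)) * sigmaYn x y * conj (ψ y) with hG1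
    set G2 : ℂ := ∑ x, ∑ y, conj (φ x) * sigmaYn x y * (conj (ψ y) - conj (φ y)) with hG2
    have hsplit : F1 - F2 = G1 + G2 := by
      rw [hF1, hF2, hG1, hG2, ← Finset.sum_sub_distrib, ← Finset.sum_add_distrib]
      refine Finset.sum_congr rfl fun x _ => ?_
      rw [← Finset.sum_sub_distrib, ← Finset.sum_add_distrib]
      exact Finset.sum_congr rfl fun y _ => by ring
    have hdc : ∀ x, ‖conj (ψ x) - conj (φ x)‖ = ‖ψ x - φ x‖ := by
      intro x
      rw [← map_sub, Complex.norm_conj]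
    have hb1 : ‖G1‖ ≤ Real.sqrt (2 - 2 * t) * 1 := by
      have h := bilin_bound (fun x => conj (ψ x) - conj (φ x)) (fun y => conj (ψ y))
      simpa [hdc, Complex.norm_conj, hdist, hsψ] using h
    have hb2 : ‖G2‖ ≤ 1 * Real.sqrt (2 - 2 * t) := by
      have h := bilin_bound (fun x => conj (φ x)) (fun y => conj (ψ y) - conj (φ y))
      simpa [hdc, Complex.norm_conj, hdist, hsφ] using h
    calc |‖F1‖ - ‖F2‖| ≤ ‖F1 - F2‖ :=
          abs_norm_sub_norm_le F1 F2
      _ = ‖G1 + G2‖ := by rw [hsplit]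
      _ ≤ ‖G1‖ + ‖G2‖ := norm_add_le _ _
      _ ≤ Real.sqrt (2 - 2 * t) * 1 + 1 * Real.sqrt (2 - 2 * t) := add_le_add hb1 hb2
      _ = 2 * Real.sqrt (2 - 2 * t) := by ring
  -- trace-norm computation
  set D : Matrix (Fin n → Fin 2) (Fin n → Fin 2) ℂ := dm ψ - dm φ with hD
  have hHerm : D.conjTranspose = D := by
    rw [hD, Matrix.conjTranspose_sub, conjTranspose_dm, conjTranspose_dm]
  have hD2 : D * D = outer ψ ψ + outer φ φ - (t : ℂ) • outer ψ φ - (t : ℂ) • outer φ ψ := by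
    rw [hD, dm_eq_outer, dm_eq_outer]
    simp only [sub_mul, mul_sub, outer_mul_outer, hψ, hbφφ, hbψφ, hbφψ, one_smul]
    abel
  have hD3 : D * D * D = ((1 : ℂ) - (t : ℂ) ^ 2) • D := by
    rw [hD2, hD, dm_eq_outer, dm_eq_outer]
    simp only [sub_mul, add_mul, mul_sub, Matrix.smul_mul, outer_mul_outer, hψ, hbφφ, hbψφ,
      hbφψ, one_smul, smul_smul]
    module
  have hpsd : (D.conjTranspose * D).PosSemidef := Matrix.posSemidef_conjTranspose_mul_self D
  have hTN : traceNorm (dm ψ - dm ψ') = 2 * Real.sqrt (1 - t ^ 2) := by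
    have hDrw : dm ψ - dm ψ' = D := by rw [hD, hdmφ]
    rw [hDrw, traceNorm, psdSqrt, dif_pos hpsd]
    rcases eq_or_lt_of_le ht1 with hteq | htlt
    · -- degenerate case t = 1
      have hsc : ((1 : ℂ) - (t : ℂ) ^ 2) = 0 := by
        rw [hteq]; norm_num
      have hD3' : D * D * D = 0 := by rw [hD3, hsc, zero_smul]
      have h4 : (D * D).conjTranspose * (D * D) = 0 := by
        rw [Matrix.conjTranspose_mul, hHerm, ← mul_assoc, hD3', Matrix.zero_mul]
      have hDD0 : D * D = 0 := Matrix.conjTranspose_mul_self_eq_zero.mp h4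
      have hDtD0 : D.conjTranspose * D = 0 := by rw [hHerm, hDD0]
      have hz : (0 : Matrix (Fin n → Fin 2) (Fin n → Fin 2) ℂ) = _ :=
        psdSqrt_unique hpsd Matrix.PosSemidef.zero (by
          rw [hDtD0]; simp [sq])
      rw [← hz, hteq]
      norm_num
    · -- nondegenerate case t < 1
      have hμ : 0 < 1 - t ^ 2 := by nlinarith
      set lam : ℝ := Real.sqrt (1 - t ^ 2) with hlamdef
      have hlam : 0 < lam := Real.sqrt_pos.mpr hμ
      have hll : lam * lam = 1 - t ^ 2 := Real.mul_self_sqrt hμ.le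
      set S : Matrix (Fin n → Fin 2) (Fin n → Fin 2) ℂ :=
        ((lam⁻¹ : ℝ) : ℂ) • (D * D) with hS
      set E : Matrix (Fin n → Fin 2) (Fin n → Fin 2) ℂ :=
        ((Real.sqrt lam⁻¹ : ℝ) : ℂ) • D with hE
      have hSE : S = E.conjTranspose * E := by
        rw [hE, Matrix.conjTranspose_smul, hHerm, Matrix.smul_mul, Matrix.mul_smul, smul_smul]
        rw [hS]
        congr 1
        rw [Complex.star_def, Complex.conj_ofReal, ← Complex.ofReal_mul,
          Real.mul_self_sqrt (inv_nonneg.mpr hlam.le)]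
      have hSpsd : S.PosSemidef := by
        rw [hSE]; exact Matrix.posSemidef_conjTranspose_mul_self E
      have hSsq : S ^ 2 = D.conjTranspose * D := by
        rw [hHerm, sq, hS, Matrix.smul_mul, Matrix.mul_smul, smul_smul]
        have h4 : D * D * (D * D) = ((1 : ℂ) - (t : ℂ) ^ 2) • (D * D) := by
          calc D * D * (D * D) = D * D * D * D := by rw [mul_assoc (D * D) D D]
          _ = (((1 : ℂ) - (t : ℂ) ^ 2) • D) * D := by rw [hD3]
          _ = ((1 : ℂ) - (t : ℂ) ^ 2) • (D * D) := by rw [Matrix.smul_mul]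
        rw [h4, smul_smul]
        have hscal : ((lam⁻¹ : ℝ) : ℂ) * ((lam⁻¹ : ℝ) : ℂ) * ((1 : ℂ) - (t : ℂ) ^ 2) = 1 := by
          have hr : lam⁻¹ * lam⁻¹ * (1 - t ^ 2) = 1 := by
            rw [← hll]; field_simp
          calc ((lam⁻¹ : ℝ) : ℂ) * ((lam⁻¹ : ℝ) : ℂ) * ((1 : ℂ) - (t : ℂ) ^ 2)
              = ((lam⁻¹ * lam⁻¹ * (1 - t ^ 2) : ℝ) : ℂ) := by push_cast; ring
          _ = 1 := by rw [hr]; norm_num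
        rw [hscal, one_smul]
      have hsqrt : S = _ := psdSqrt_unique hpsd hSpsd hSsq
      rw [← hsqrt]
      have htr : (D * D).trace = ((2 - 2 * t ^ 2 : ℝ) : ℂ) := by
        rw [hD2]
        rw [Matrix.trace_sub, Matrix.trace_sub, Matrix.trace_add, Matrix.trace_smul,
          Matrix.trace_smul, trace_outer, trace_outer, trace_outer, trace_outer,
          hψ, hbφφ, hbψφ, hbφψ]
        push_cast
        simp [smul_eq_mul]
        ring
      rw [hS, Matrix.trace_smul, htr]
      have : ((lam⁻¹ : ℝ) : ℂ) • ((2 - 2 * t ^ 2 : ℝ) : ℂ) =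
          ((lam⁻¹ * (2 - 2 * t ^ 2) : ℝ) : ℂ) := by
        rw [smul_eq_mul]; push_cast; ring
      rw [this, Complex.ofReal_re]
      rw [show (2 : ℝ) - 2 * t ^ 2 = 2 * (lam * lam) by rw [hll]; ring]
      field_simp
  -- final assembly
  have hnum : 2 * Real.sqrt (2 - 2 * t) ≤ Real.sqrt 2 * (2 * Real.sqrt (1 - t ^ 2)) := by
    have h1 : Real.sqrt (2 - 2 * t) = Real.sqrt 2 * Real.sqrt (1 - t) := by
      rw [show (2 : ℝ) - 2 * t = 2 * (1 - t) by ring, Real.sqrt_mul (by norm_num)]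
    have h2 : Real.sqrt (1 - t ^ 2) = Real.sqrt (1 - t) * Real.sqrt (1 + t) := by
      rw [show (1 : ℝ) - t ^ 2 = (1 - t) * (1 + t) by ring,
        Real.sqrt_mul (by linarith)]
    have h3 : (1 : ℝ) ≤ Real.sqrt (1 + t) :=
      (Real.le_sqrt (by norm_num) (by linarith)).mpr (by nlinarith)
    rw [h1, h2]
    have h4 : 0 ≤ Real.sqrt (1 - t) := Real.sqrt_nonneg _
    have h5 : 0 ≤ Real.sqrt 2 := Real.sqrt_nonneg _
    nlinarith [mul_le_mul_of_nonneg_left h3 (mul_nonneg h5 h4)]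
  calc |tangle ψ - tangle ψ'| = |tangle ψ - tangle φ| := by rw [htangleφ]
    _ ≤ 2 * Real.sqrt (2 - 2 * t) := hmain1
    _ ≤ Real.sqrt 2 * (2 * Real.sqrt (1 - t ^ 2)) := hnum
    _ = Real.sqrt 2 * traceNorm (dm ψ - dm ψ') := by rw [hTN]

end QIpaper
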